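/- Let α be an algebraic number of degree d with conjugates α₁, …, α_d, and suppose m > 1 is such that α^m has degree less than d. Then there exist indices i ≠ j and an m-th root of unity ζ ≠ 1 such that α_i = ζ·α_j. -/

import Mathlib

open Polynomial

theorem stmt_2 (α : ℂ) (hα : IsAlgebraic ℚ α) (d : ℕ)
    (hd : (minpoly ℚ α).natDegree = d) (m : ℕ) (hm : 1 < m)
    (hlt : (minpoly ℚ (α ^ m)).natDegree < d) :
    ∃ β γ : ℂ, β ≠ γ ∧
      Polynomial.aeval β (minpoly ℚ α) = 0 ∧
      Polynomial.aeval γ (minpoly ℚ α) = 0 ∧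
      ∃ ζ : ℂ, ζ ^ m = 1 ∧ ζ ≠ 1 ∧ β = ζ * γ := by
  have hint : IsIntegral ℚ α := hα.isIntegral
  have hint2 : IsIntegral ℚ (α ^ m) := hint.pow m
  set p := minpoly ℚ α with hp
  set q := minpoly ℚ (α ^ m) with hq
  -- p divides q.comp (X^m)
  have hdvd : p ∣ q.comp (X ^ m) := by
    apply minpoly.dvd
    simp only [aeval_comp, map_pow, aeval_X]
    exact minpoly.aeval ℚ (α ^ m)
  -- every root β of p satisfies q(β^m)=0
  have hroot : ∀ β ∈ p.rootSet ℂ, (β ^ m) ∈ q.rootSet ℂ := by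
    intro β hβ
    rw [mem_rootSet] at hβ ⊢
    refine ⟨minpoly.ne_zero hint2, ?_⟩
    obtain ⟨r, hr⟩ := hdvd
    have := hβ.2
    have h2 : (aeval β) (q.comp (X ^ m)) = 0 := by
      rw [hr, map_mul, this, zero_mul]
    simpa [aeval_comp] using h2
  -- cardinalities
  have hsepp : p.Separable := PerfectField.separable_of_irreducible (minpoly.irreducible hint)
  have hsepq : q.Separable := PerfectField.separable_of_irreducible (minpoly.irreducible hint2)
  have hcardp : Fintype.card (p.rootSet ℂ) = d := by
    rw [card_rootSet_eq_natDegree hsepp (IsAlgClosed.splits (p.map (algebraMap ℚ ℂ))), hd]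
  have hcardq : Fintype.card (q.rootSet ℂ) < d := by
    rw [card_rootSet_eq_natDegree hsepq (IsAlgClosed.splits (q.map (algebraMap ℚ ℂ)))]
    exact hlt
  -- pigeonhole
  have hcard : Fintype.card (q.rootSet ℂ) < Fintype.card (p.rootSet ℂ) := by omega
  obtain ⟨x, y, hxy, heq⟩ := Fintype.exists_ne_map_eq_of_card_lt
    (fun x : p.rootSet ℂ => (⟨(x : ℂ) ^ m, hroot x x.2⟩ : q.rootSet ℂ)) hcard
  have hxm : (x : ℂ) ^ m = (y : ℂ) ^ m := by
    simpa using congrArg Subtype.val heq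
  have hne : (x : ℂ) ≠ (y : ℂ) := fun h => hxy (Subtype.ext h)
  have hy0 : (y : ℂ) ≠ 0 := by
    intro h
    apply hne
    have : (x : ℂ) ^ m = 0 := by rw [hxm, h, zero_pow (by omega)]
    rw [h, pow_eq_zero_iff (n := m) (by omega) |>.mp this]
  refine ⟨x, y, hne, ?_, ?_, (x : ℂ) / (y : ℂ), ?_, ?_, ?_⟩
  · exact (mem_rootSet.mp x.2).2
  · exact (mem_rootSet.mp y.2).2
  · rw [div_pow, hxm, div_self (pow_ne_zero m hy0)]
  · intro h
    apply hne
    field_simp at h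
    exact h
  · rw [div_mul_cancel₀ _ hy0]
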